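/- arXiv:0712.2270 — 5 statements merged into one kernel-verified Lean document; each statement's English description precedes it below -/
import Mathlib

section
/- Let (Bₙ) be a sequence of subsets of X such that each Bₙ is Caratheodory measurable with respect to μ* (i.e., for every A ⊆ X, μ*(A) = μ*(A ∩ Bₙ) + μ*(A ∩ Bₙᶜ)), and let E ⊆ X satisfy μ*(Bₙ △ E) → 0 as n → ∞. Then E is Caratheodory measurable with respect to μ*. -/
open scoped symmDiff
open MeasureTheory Filter Topology

/-- If each `Bₙ` is Caratheodory measurable with respect to `μ*` and
`μ*(Bₙ △ E) → 0`, then `E` is Caratheodory measurable with respect to `μ*`. -/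
theorem stmt_4 {X : Type*} (μStar : OuterMeasure X) (B : ℕ → Set X) (E : Set X)
    (hB : ∀ n, ∀ A : Set X, μStar A = μStar (A ∩ B n) + μStar (A ∩ (B n)ᶜ))
    (hconv : Tendsto (fun n => μStar (B n ∆ E)) atTop (𝓝 0)) :
    ∀ A : Set X, μStar A = μStar (A ∩ E) + μStar (A ∩ Eᶜ) := by
  intro A
  refine le_antisymm ?_ ?_
  · calc μStar A = μStar ((A ∩ E) ∪ (A ∩ Eᶜ)) := by rw [Set.inter_union_compl]
    _ ≤ μStar (A ∩ E) + μStar (A ∩ Eᶜ) := measure_union_le _ _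
  · have key : ∀ n, μStar (A ∩ E) + μStar (A ∩ Eᶜ)
        ≤ μStar A + 2 * μStar (B n ∆ E) := by
      intro n
      have h1 : μStar (A ∩ E) ≤ μStar (A ∩ B n) + μStar (B n ∆ E) := by
        refine le_trans (measure_mono ?_) (measure_union_le _ _)
        intro x hx
        by_cases hb : x ∈ B n
        · exact Or.inl ⟨hx.1, hb⟩
        · exact Or.inr (by simp [Set.mem_symmDiff, hb, hx.2])
      have h2 : μStar (A ∩ Eᶜ) ≤ μStar (A ∩ (B n)ᶜ) + μStar (B n ∆ E) := by
        refine le_trans (measure_mono ?_) (measure_union_le _ _)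
        intro x hx
        by_cases hb : x ∈ B n
        · exact Or.inr (by simp only [Set.mem_symmDiff]; exact Or.inl ⟨hb, hx.2⟩)
        · exact Or.inl ⟨hx.1, hb⟩
      calc μStar (A ∩ E) + μStar (A ∩ Eᶜ)
          ≤ (μStar (A ∩ B n) + μStar (B n ∆ E))
            + (μStar (A ∩ (B n)ᶜ) + μStar (B n ∆ E)) := add_le_add h1 h2
        _ = (μStar (A ∩ B n) + μStar (A ∩ (B n)ᶜ)) + 2 * μStar (B n ∆ E) := by
            ring
        _ = μStar A + 2 * μStar (B n ∆ E) := by rw [← hB n A]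
    have hlim : Tendsto (fun n => μStar A + 2 * μStar (B n ∆ E)) atTop
        (𝓝 (μStar A + 2 * 0)) :=
      tendsto_const_nhds.add (ENNReal.Tendsto.const_mul hconv (Or.inr (by norm_num)))
    simpa using ge_of_tendsto' hlim key
end

section
/- The family S̃ is an algebra of subsets of X: Ω ⊆ S̃, and if S₁, S₂ ∈ S̃ then S₁ ∪ S₂ ∈ S̃ and S₁ᶜ ∈ S̃. -/
open scoped symmDiff ENNReal
open Filter Set Topology Classical

/-- The outer measure induced by `μ : Ω → ℝ≥0∞`:
`μ*(E) = inf { ∑ᵢ μ(Aᵢ) : E ⊆ ⋃ᵢ Aᵢ, each Aᵢ ∈ Ω }`. -/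
noncomputable def muStar {X : Type*} (Ω : Set (Set X)) (μ : Set X → ℝ≥0∞) (E : Set X) : ℝ≥0∞ :=
  ⨅ (A : ℕ → Set X) (_ : ∀ i, A i ∈ Ω) (_ : E ⊆ ⋃ i, A i), ∑' i, μ (A i)

/-- `S̃ = { S ⊆ X : ∃ (Bₙ) in Ω with μ*(Bₙ △ S) → 0 }`. -/
def Stilde {X : Type*} (Ω : Set (Set X)) (μ : Set X → ℝ≥0∞) : Set (Set X) :=
  {S | ∃ B : ℕ → Set X, (∀ n, B n ∈ Ω) ∧
    Tendsto (fun n => muStar Ω μ (B n ∆ S)) atTop (𝓝 0)}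

lemma muStar_eq_ofFunction {X : Type*} (Ω : Set (Set X)) (μ : Set X → ℝ≥0∞)
    (hΩempty : ∅ ∈ Ω) (hμempty : μ ∅ = 0) (E : Set X) :
    muStar Ω μ E = MeasureTheory.OuterMeasure.ofFunction
      (fun A => if A ∈ Ω then μ A else ⊤)
      (by simp [hΩempty, hμempty]) E := by
  rw [MeasureTheory.OuterMeasure.ofFunction_apply]
  apply le_antisymm
  · refine le_iInf₂ fun t ht => ?_
    by_cases h : ∀ i, t i ∈ Ω
    · refine le_trans (iInf₂_le t h) ?_
      refine le_trans (iInf_le _ ht) (le_of_eq ?_)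
      exact tsum_congr fun i => (if_pos (h i)).symm
    · push_neg at h
      obtain ⟨i, hi⟩ := h
      have : (∑' n, if t n ∈ Ω then μ (t n) else ⊤) = ⊤ :=
        top_le_iff.mp (le_trans (le_of_eq (if_neg hi).symm) (ENNReal.le_tsum i))
      simp [this]
  · refine le_iInf fun A => le_iInf fun hA => le_iInf fun hE => ?_
    refine le_trans (iInf₂_le A hE) (le_of_eq (tsum_congr fun i => if_pos (hA i)))

lemma muStar_mono {X : Type*} (Ω : Set (Set X)) (μ : Set X → ℝ≥0∞)
    {E F : Set X} (h : E ⊆ F) : muStar Ω μ E ≤ muStar Ω μ F := by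
  refine le_iInf fun A => le_iInf fun hA => le_iInf fun hF => ?_
  exact iInf₂_le_of_le A hA (iInf_le_of_le (h.trans hF) le_rfl)

lemma muStar_union_le {X : Type*} (Ω : Set (Set X)) (μ : Set X → ℝ≥0∞)
    (hΩempty : ∅ ∈ Ω) (hμempty : μ ∅ = 0) (E F : Set X) :
    muStar Ω μ (E ∪ F) ≤ muStar Ω μ E + muStar Ω μ F := by
  simp only [muStar_eq_ofFunction Ω μ hΩempty hμempty]
  exact MeasureTheory.measure_union_le E F

/-- `S̃` is an algebra of subsets of `X`: `Ω ⊆ S̃`, and if `S₁, S₂ ∈ S̃` then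
`S₁ ∪ S₂ ∈ S̃` and `S₁ᶜ ∈ S̃`. -/
theorem stmt_8 {X : Type*} (Ω : Set (Set X)) (μ : Set X → ℝ≥0∞)
    (hΩempty : ∅ ∈ Ω) (hΩuniv : Set.univ ∈ Ω)
    (hΩcompl : ∀ A ∈ Ω, Aᶜ ∈ Ω) (hΩunion : ∀ A ∈ Ω, ∀ B ∈ Ω, A ∪ B ∈ Ω)
    (hμempty : μ ∅ = 0) (hμfin : μ Set.univ < ⊤)
    (hμadd : ∀ A : ℕ → Set X, (∀ i, A i ∈ Ω) → Pairwise (Function.onFun Disjoint A) →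
      (⋃ i, A i) ∈ Ω → μ (⋃ i, A i) = ∑' i, μ (A i)) :
    Ω ⊆ Stilde Ω μ ∧
      (∀ S₁ ∈ Stilde Ω μ, ∀ S₂ ∈ Stilde Ω μ, S₁ ∪ S₂ ∈ Stilde Ω μ) ∧
      (∀ S₁ ∈ Stilde Ω μ, S₁ᶜ ∈ Stilde Ω μ) := by
  have hzero : muStar Ω μ ∅ = 0 := by
    refine le_antisymm ?_ zero_le
    refine le_trans (iInf₂_le (fun _ => (∅ : Set X)) (fun _ => hΩempty)) ?_
    refine le_trans (iInf_le _ (by simp)) (le_of_eq (by simp [hμempty]))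
  refine ⟨?_, ?_, ?_⟩
  · intro A hA
    refine ⟨fun _ => A, fun _ => hA, ?_⟩
    simpa [symmDiff_self, hzero] using tendsto_const_nhds (α := ℝ≥0∞) (f := atTop (α := ℕ))
  · rintro S₁ ⟨B, hB, hBt⟩ S₂ ⟨C, hC, hCt⟩
    refine ⟨fun n => B n ∪ C n, fun n => hΩunion _ (hB n) _ (hC n), ?_⟩
    have hsub : ∀ n, (B n ∪ C n) ∆ (S₁ ∪ S₂) ⊆ (B n ∆ S₁) ∪ (C n ∆ S₂) := by
      intro n x hx
      simp only [Set.mem_union, Set.mem_symmDiff] at hx ⊢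
      tauto
    have hle : ∀ n, muStar Ω μ ((B n ∪ C n) ∆ (S₁ ∪ S₂)) ≤
        muStar Ω μ (B n ∆ S₁) + muStar Ω μ (C n ∆ S₂) := fun n =>
      le_trans (muStar_mono Ω μ (hsub n))
        (muStar_union_le Ω μ hΩempty hμempty _ _)
    have hsum : Tendsto (fun n => muStar Ω μ (B n ∆ S₁) + muStar Ω μ (C n ∆ S₂))
        atTop (𝓝 0) := by
      simpa using hBt.add hCt
    exact tendsto_of_tendsto_of_tendsto_of_le_of_le tendsto_const_nhds hsum
      (fun n => zero_le) hle
  · rintro S₁ ⟨B, hB, hBt⟩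
    refine ⟨fun n => (B n)ᶜ, fun n => hΩcompl _ (hB n), ?_⟩
    simpa only [compl_symmDiff_compl] using hBt
end

section
/- μ* is countably additive on S̃: if (Sᵢ) is a sequence of pairwise disjoint members of S̃, then μ*(⋃ᵢ Sᵢ) = ∑ᵢ μ*(Sᵢ). -/
open scoped symmDiff ENNReal
open Filter Set Topology

open MeasureTheory in
/-- `μ*` is countably additive on `S̃`: if `(Sᵢ)` is a sequence of pairwise disjoint
members of `S̃`, then `μ*(⋃ᵢ Sᵢ) = ∑ᵢ μ*(Sᵢ)`. -/
theorem stmt_12 {X : Type*} (Ω : Set (Set X)) (μ : Set X → ℝ≥0∞)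
    (hΩempty : ∅ ∈ Ω) (hΩuniv : Set.univ ∈ Ω)
    (hΩcompl : ∀ A ∈ Ω, Aᶜ ∈ Ω) (hΩunion : ∀ A ∈ Ω, ∀ B ∈ Ω, A ∪ B ∈ Ω)
    (hμempty : μ ∅ = 0) (hμfin : μ Set.univ < ⊤)
    (hμadd : ∀ A : ℕ → Set X, (∀ i, A i ∈ Ω) → Pairwise (Function.onFun Disjoint A) →
      (⋃ i, A i) ∈ Ω → μ (⋃ i, A i) = ∑' i, μ (A i))
    (S : ℕ → Set X) (hS : ∀ i, S i ∈ Stilde Ω μ)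
    (hdisj : Pairwise (Function.onFun Disjoint S)) :
    muStar Ω μ (⋃ i, S i) = ∑' i, muStar Ω μ (S i) := by
  classical
  -- closure of Ω under intersections and differences
  have hΩinter : ∀ A ∈ Ω, ∀ B ∈ Ω, A ∩ B ∈ Ω := by
    intro A hA B hB
    have : A ∩ B = (Aᶜ ∪ Bᶜ)ᶜ := by simp [Set.compl_union]
    rw [this]
    exact hΩcompl _ (hΩunion _ (hΩcompl _ hA) _ (hΩcompl _ hB))
  have hΩdiff : ∀ A ∈ Ω, ∀ B ∈ Ω, A \ B ∈ Ω := by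
    intro A hA B hB
    rw [Set.diff_eq]
    exact hΩinter _ hA _ (hΩcompl _ hB)
  -- finite additivity of μ
  have hadd2 : ∀ A ∈ Ω, ∀ B ∈ Ω, Disjoint A B → μ (A ∪ B) = μ A + μ B := by
    intro A hA B hB hAB
    set f : ℕ → Set X := fun n => if n = 0 then A else if n = 1 then B else ∅ with hf
    have hfΩ : ∀ n, f n ∈ Ω := by
      intro n
      rcases n with _ | _ | n <;> simp [hf, hA, hB, hΩempty]
    have hfU : (⋃ n, f n) = A ∪ B := by
      apply subset_antisymm
      · refine Set.iUnion_subset fun n => ?_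
        rcases n with _ | _ | n <;> simp [hf]
      · refine Set.union_subset ?_ ?_
        · exact (by simp [hf] : f 0 = A) ▸ Set.subset_iUnion f 0
        · exact (by simp [hf] : f 1 = B) ▸ Set.subset_iUnion f 1
    have hfd : Pairwise (Function.onFun Disjoint f) := by
      intro i j hij
      simp only [Function.onFun, hf]
      rcases i with _ | _ | i <;> rcases j with _ | _ | j <;>
        first
          | exact absurd rfl hij
          | simp [hAB, hAB.symm]
    have := hμadd f hfΩ hfd (hfU ▸ hΩunion _ hA _ hB)
    rw [hfU] at this
    rw [this, tsum_eq_sum (s := {0, 1}) (by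
      intro n hn
      have h0 : n ≠ 0 := by rintro rfl; simp at hn
      have h1 : n ≠ 1 := by rintro rfl; simp at hn
      simp [hf, h0, h1, hμempty])]
    simp [hf]
  -- the outer measure
  set m : Set X → ℝ≥0∞ := fun A => if A ∈ Ω then μ A else ⊤ with hm
  have hm0 : m ∅ = 0 := by simp [hm, hΩempty, hμempty]
  set M := OuterMeasure.ofFunction m hm0 with hM
  -- muStar coincides with M
  have hkey : ∀ E, muStar Ω μ E = M E := by
    intro E
    rw [hM, OuterMeasure.ofFunction_apply]
    apply le_antisymm
    · refine le_iInf fun f => le_iInf fun hf => ?_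
      by_cases hfΩ : ∀ i, f i ∈ Ω
      · calc muStar Ω μ E ≤ ∑' i, μ (f i) :=
              iInf_le_of_le f (iInf_le_of_le hfΩ (iInf_le _ hf))
          _ = ∑' i, m (f i) := tsum_congr fun i => by simp [hm, hfΩ i]
      · push_neg at hfΩ
        obtain ⟨i, hi⟩ := hfΩ
        have htop : m (f i) = ⊤ := by simp [hm, hi]
        have : (⊤ : ℝ≥0∞) ≤ ∑' i, m (f i) := htop ▸ ENNReal.le_tsum i
        simp [top_le_iff.mp this]
    · refine le_iInf fun f => le_iInf fun hfΩ => le_iInf fun hf => ?_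
      refine iInf_le_of_le f (iInf_le_of_le hf (le_of_eq ?_))
      exact tsum_congr fun i => by simp [hm, hfΩ i]
  -- sets of Ω are Caratheodory measurable
  have hcarΩ : ∀ A ∈ Ω, MeasurableSet[M.caratheodory] A := by
    intro A hA
    refine OuterMeasure.ofFunction_caratheodory fun t => ?_
    by_cases ht : t ∈ Ω
    · have h1 : t ∩ A ∈ Ω := hΩinter _ ht _ hA
      have h2 : t \ A ∈ Ω := hΩdiff _ ht _ hA
      have hu : (t ∩ A) ∪ (t \ A) = t := Set.inter_union_diff t A
      have := hadd2 _ h1 _ h2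
        (disjoint_sdiff_self_right.mono_left Set.inter_subset_right)
      rw [hu] at this
      simp only [hm, if_pos ht, if_pos h1, if_pos h2]
      exact le_of_eq this.symm
    · simp [hm, ht]
  -- sets of S̃ are Caratheodory measurable
  have hcarS : ∀ T ∈ Stilde Ω μ, MeasurableSet[M.caratheodory] T := by
    intro T hT
    obtain ⟨B, hBΩ, htend⟩ := hT
    simp only [hkey] at htend
    rw [OuterMeasure.isCaratheodory_iff_le]
    intro t
    refine ENNReal.le_of_forall_pos_le_add fun ε hε _ => ?_
    have hδ : (0 : ℝ≥0∞) < (ε : ℝ≥0∞) / 2 := by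
      simp [ENNReal.div_pos_iff, hε.ne']
    obtain ⟨n, hn⟩ := (htend.eventually (gt_mem_nhds hδ)).exists
    -- two inclusions
    have hsub1 : t ∩ T ⊆ (t ∩ B n) ∪ (B n ∆ T) := by
      intro x ⟨hxt, hxT⟩
      by_cases hxB : x ∈ B n
      · exact Or.inl ⟨hxt, hxB⟩
      · exact Or.inr (Set.mem_symmDiff.mpr (Or.inr ⟨hxT, hxB⟩))
    have hsub2 : t \ T ⊆ (t \ B n) ∪ (B n ∆ T) := by
      intro x ⟨hxt, hxT⟩
      by_cases hxB : x ∈ B n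
      · exact Or.inr (Set.mem_symmDiff.mpr (Or.inl ⟨hxB, hxT⟩))
      · exact Or.inl ⟨hxt, hxB⟩
    have hBn := (OuterMeasure.isCaratheodory_iff_le M).mp (hcarΩ _ (hBΩ n)) t
    calc M (t ∩ T) + M (t \ T)
        ≤ (M (t ∩ B n) + M (B n ∆ T)) + (M (t \ B n) + M (B n ∆ T)) := by
          gcongr
          · exact (measure_mono hsub1).trans (measure_union_le _ _)
          · exact (measure_mono hsub2).trans (measure_union_le _ _)
      _ = (M (t ∩ B n) + M (t \ B n)) + (M (B n ∆ T) + M (B n ∆ T)) := by ring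
      _ ≤ M t + ((ε : ℝ≥0∞) / 2 + (ε : ℝ≥0∞) / 2) := by
          gcongr <;> exact hn.le
      _ = M t + ε := by rw [ENNReal.add_halves]
  -- conclusion
  rw [hkey]
  rw [show (∑' i, muStar Ω μ (S i)) = ∑' i, M (S i) from tsum_congr fun i => hkey _]
  exact M.iUnion_eq_of_caratheodory (fun i => hcarS _ (hS i)) hdisj
end

section
/- If E ∈ S̃, then E is Caratheodory measurable with respect to μ*: for every A ⊆ X, μ*(A) = μ*(A ∩ E) + μ*(A ∩ Eᶜ). -/
open scoped symmDiff ENNReal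
open Filter Set Topology

section Aux

open MeasureTheory

variable {X : Type*} (Ω : Set (Set X)) (μ : Set X → ℝ≥0∞)

/-- Extension of `μ` to all subsets, with value `⊤` off `Ω`. -/
noncomputable def mExt : Set X → ℝ≥0∞ :=
  open Classical in fun A => if A ∈ Ω then μ A else ⊤

lemma mExt_empty (hΩempty : ∅ ∈ Ω) (hμempty : μ ∅ = 0) : mExt Ω μ ∅ = 0 := by
  simp [mExt, hΩempty, hμempty]

lemma muStar_eq_ofFunction_s14 (hΩempty : ∅ ∈ Ω) (hμempty : μ ∅ = 0) (E : Set X) :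
    muStar Ω μ E = OuterMeasure.ofFunction (mExt Ω μ) (mExt_empty Ω μ hΩempty hμempty) E := by
  rw [OuterMeasure.ofFunction_apply]
  apply le_antisymm
  · refine le_iInf fun A => le_iInf fun hc => ?_
    by_cases hA : ∀ i, A i ∈ Ω
    · have he : ∑' i, mExt Ω μ (A i) = ∑' i, μ (A i) :=
        tsum_congr fun i => by simp [mExt, hA i]
      rw [he]
      exact iInf_le_of_le A (iInf_le_of_le hA (iInf_le_of_le hc le_rfl))
    · push_neg at hA
      obtain ⟨i, hi⟩ := hA
      have : mExt Ω μ (A i) = ⊤ := by simp [mExt, hi]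
      refine le_trans ?_ (ENNReal.le_tsum i)
      simp [this]
  · refine le_iInf fun A => le_iInf fun hA => le_iInf fun hc => ?_
    have he : ∑' i, mExt Ω μ (A i) = ∑' i, μ (A i) :=
      tsum_congr fun i => by simp [mExt, hA i]
    exact le_trans (iInf_le_of_le A (iInf_le_of_le hc le_rfl)) he.le

/-- Finite additivity of the premeasure on the algebra. -/
lemma mu_add2 (hΩempty : ∅ ∈ Ω) (hμempty : μ ∅ = 0)
    (hμadd : ∀ A : ℕ → Set X, (∀ i, A i ∈ Ω) → Pairwise (Function.onFun Disjoint A) →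
      (⋃ i, A i) ∈ Ω → μ (⋃ i, A i) = ∑' i, μ (A i))
    {S T : Set X} (hS : S ∈ Ω) (hT : T ∈ Ω) (hST : S ∪ T ∈ Ω) (hd : Disjoint S T) :
    μ (S ∪ T) = μ S + μ T := by
  classical
  set A : ℕ → Set X := fun n => if n = 0 then S else if n = 1 then T else ∅ with hA
  have hmem : ∀ i, A i ∈ Ω := by
    intro i; dsimp [A]; split_ifs <;> assumption
  have hU : ⋃ i, A i = S ∪ T := by
    apply subset_antisymm
    · refine iUnion_subset fun i => ?_
      dsimp [A]; split_ifs
      · exact subset_union_left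
      · exact subset_union_right
      · exact empty_subset _
    · refine union_subset ?_ ?_
      · exact subset_iUnion_of_subset 0 (by simp [A])
      · exact subset_iUnion_of_subset 1 (by simp [A])
  have hpw : Pairwise (Function.onFun Disjoint A) := by
    intro i j hij
    simp only [Function.onFun, A]
    split_ifs <;> simp_all <;> first
      | exact hd
      | exact hd.symm
  have := hμadd A hmem hpw (hU ▸ hST)
  rw [hU] at this
  rw [this]
  have htsum : ∑' i, μ (A i) = μ S + μ T := by
    rw [tsum_eq_sum (s := ({0, 1} : Finset ℕ)) (f := fun i => μ (A i))
      (fun b hb => by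
        simp only [Finset.mem_insert, Finset.mem_singleton, not_or] at hb
        simp [A, hb.1, hb.2, hμempty])]
    rw [Finset.sum_pair (by norm_num : (0 : ℕ) ≠ 1)]
    simp [A]
  exact htsum

lemma inter_mem (hΩcompl : ∀ A ∈ Ω, Aᶜ ∈ Ω) (hΩunion : ∀ A ∈ Ω, ∀ B ∈ Ω, A ∪ B ∈ Ω)
    {S T : Set X} (hS : S ∈ Ω) (hT : T ∈ Ω) : S ∩ T ∈ Ω := by
  have := hΩcompl _ (hΩunion _ (hΩcompl _ hS) _ (hΩcompl _ hT))
  simpa [Set.compl_union] using this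

end Aux

/-- If `E ∈ S̃`, then `E` is Caratheodory measurable with respect to `μ*`. -/
theorem stmt_14 {X : Type*} (Ω : Set (Set X)) (μ : Set X → ℝ≥0∞)
    (hΩempty : ∅ ∈ Ω) (hΩuniv : Set.univ ∈ Ω)
    (hΩcompl : ∀ A ∈ Ω, Aᶜ ∈ Ω) (hΩunion : ∀ A ∈ Ω, ∀ B ∈ Ω, A ∪ B ∈ Ω)
    (hμempty : μ ∅ = 0) (hμfin : μ Set.univ < ⊤)
    (hμadd : ∀ A : ℕ → Set X, (∀ i, A i ∈ Ω) → Pairwise (Function.onFun Disjoint A) →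
      (⋃ i, A i) ∈ Ω → μ (⋃ i, A i) = ∑' i, μ (A i))
    (E : Set X) (hE : E ∈ Stilde Ω μ) :
    ∀ A : Set X, muStar Ω μ A = muStar Ω μ (A ∩ E) + muStar Ω μ (A ∩ Eᶜ) := by
  classical
  set ν := MeasureTheory.OuterMeasure.ofFunction (mExt Ω μ) (mExt_empty Ω μ hΩempty hμempty)
    with hν
  have key : ∀ S : Set X, muStar Ω μ S = ν S := fun S =>
    muStar_eq_ofFunction_s14 Ω μ hΩempty hμempty S
  -- every member of Ω is Carathéodory measurable for ν
  have hcar : ∀ B ∈ Ω, ∀ t : Set X, ν t = ν (t ∩ B) + ν (t \ B) := by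
    intro B hB
    refine (MeasureTheory.OuterMeasure.isCaratheodory_iff _).mp
      (MeasureTheory.OuterMeasure.ofFunction_caratheodory ?_)
    intro t
    by_cases ht : t ∈ Ω
    · have h1 : t ∩ B ∈ Ω := inter_mem Ω hΩcompl hΩunion ht hB
      have h2 : t \ B ∈ Ω := by
        rw [Set.diff_eq]
        exact inter_mem Ω hΩcompl hΩunion ht (hΩcompl _ hB)
      have hd : Disjoint (t ∩ B) (t \ B) := Set.disjoint_of_subset_left
        Set.inter_subset_right disjoint_sdiff_right
      have hu : (t ∩ B) ∪ (t \ B) = t := Set.inter_union_diff t B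
      have := mu_add2 Ω μ hΩempty hμempty hμadd h1 h2 (by rw [hu]; exact ht) hd
      rw [hu] at this
      simp only [mExt, if_pos ht, if_pos h1, if_pos h2]
      exact this.symm.le
    · simp [mExt, ht]
  intro A
  obtain ⟨B, hB, hTend⟩ := hE
  simp only [key] at hTend ⊢
  apply le_antisymm
  · calc ν A = ν ((A ∩ E) ∪ (A ∩ Eᶜ)) := by rw [Set.inter_union_compl]
    _ ≤ ν (A ∩ E) + ν (A ∩ Eᶜ) := MeasureTheory.measure_union_le _ _
  · have hn : ∀ n, ν (A ∩ E) + ν (A ∩ Eᶜ) ≤ ν A + (ν (B n ∆ E) + ν (B n ∆ E)) := by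
      intro n
      have sub1 : A ∩ E ⊆ (A ∩ B n) ∪ (B n ∆ E) := by
        rintro x ⟨hxA, hxE⟩
        by_cases hxB : x ∈ B n
        · exact Or.inl ⟨hxA, hxB⟩
        · exact Or.inr (Set.mem_symmDiff.mpr (Or.inr ⟨hxE, hxB⟩))
      have sub2 : A ∩ Eᶜ ⊆ (A \ B n) ∪ (B n ∆ E) := by
        rintro x ⟨hxA, hxE⟩
        by_cases hxB : x ∈ B n
        · exact Or.inr (Set.mem_symmDiff.mpr (Or.inl ⟨hxB, hxE⟩))
        · exact Or.inl ⟨hxA, hxB⟩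
      have h1 : ν (A ∩ E) ≤ ν (A ∩ B n) + ν (B n ∆ E) :=
        le_trans (MeasureTheory.measure_mono sub1) (MeasureTheory.measure_union_le _ _)
      have h2 : ν (A ∩ Eᶜ) ≤ ν (A \ B n) + ν (B n ∆ E) :=
        le_trans (MeasureTheory.measure_mono sub2) (MeasureTheory.measure_union_le _ _)
      calc ν (A ∩ E) + ν (A ∩ Eᶜ)
          ≤ (ν (A ∩ B n) + ν (B n ∆ E)) + (ν (A \ B n) + ν (B n ∆ E)) := add_le_add h1 h2
        _ = (ν (A ∩ B n) + ν (A \ B n)) + (ν (B n ∆ E) + ν (B n ∆ E)) := by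
            rw [add_add_add_comm]
        _ = ν A + (ν (B n ∆ E) + ν (B n ∆ E)) := by rw [← hcar (B n) (hB n) A]
    have hlim : Tendsto (fun n => ν A + (ν (B n ∆ E) + ν (B n ∆ E))) atTop (𝓝 (ν A)) := by
      have := (hTend.add hTend).const_add (ν A)
      simpa using this
    exact ge_of_tendsto hlim (Filter.Eventually.of_forall hn)
end

section
/- A subset E ⊆ X is Caratheodory measurable with respect to μ* (i.e., for every A ⊆ X, μ*(A) = μ*(A ∩ E) + μ*(A ∩ Eᶜ)) if and only if E ∈ S̃. -/
open scoped symmDiff ENNReal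
open Filter Set Topology

open MeasureTheory

/-- `E ⊆ X` is Caratheodory measurable with respect to `μ*` iff `E ∈ S̃`. -/
theorem stmt_15 {X : Type*} (Ω : Set (Set X)) (μ : Set X → ℝ≥0∞)
    (hΩempty : ∅ ∈ Ω) (hΩuniv : Set.univ ∈ Ω)
    (hΩcompl : ∀ A ∈ Ω, Aᶜ ∈ Ω) (hΩunion : ∀ A ∈ Ω, ∀ B ∈ Ω, A ∪ B ∈ Ω)
    (hμempty : μ ∅ = 0) (hμfin : μ Set.univ < ⊤)
    (hμadd : ∀ A : ℕ → Set X, (∀ i, A i ∈ Ω) → Pairwise (Function.onFun Disjoint A) →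
      (⋃ i, A i) ∈ Ω → μ (⋃ i, A i) = ∑' i, μ (A i))
    (E : Set X) :
    (∀ A : Set X, muStar Ω μ A = muStar Ω μ (A ∩ E) + muStar Ω μ (A ∩ Eᶜ)) ↔
      E ∈ Stilde Ω μ := by
  classical
  set m : Set X → ℝ≥0∞ := fun t => if t ∈ Ω then μ t else ⊤ with hmdef
  have hm0 : m ∅ = 0 := by simp [hmdef, hΩempty, hμempty]
  set ν := MeasureTheory.OuterMeasure.ofFunction m hm0 with hνdef
  have hmu : ∀ s : Set X, muStar Ω μ s = ν s := by
    intro s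
    rw [hνdef, MeasureTheory.OuterMeasure.ofFunction_eq_iInf_mem m hm0
      (P := (· ∈ Ω)) (fun t ht => if_neg ht) s]
    unfold muStar
    refine iInf_congr fun t => iInf_congr fun ht => iInf_congr fun _ => ?_
    exact tsum_congr fun i => (if_pos (ht i)).symm
  -- closure properties of the algebra
  have hΩinter : ∀ A ∈ Ω, ∀ B ∈ Ω, A ∩ B ∈ Ω := by
    intro A hA B hB
    have := hΩcompl _ (hΩunion _ (hΩcompl _ hA) _ (hΩcompl _ hB))
    simpa [Set.compl_union] using this
  have hΩdiff : ∀ A ∈ Ω, ∀ B ∈ Ω, A \ B ∈ Ω := by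
    intro A hA B hB
    simpa [Set.diff_eq] using hΩinter _ hA _ (hΩcompl _ hB)
  -- finite additivity of μ
  have hadd2 : ∀ A ∈ Ω, ∀ B ∈ Ω, Disjoint A B → μ (A ∪ B) = μ A + μ B := by
    intro A hA B hB hd
    set f : ℕ → Set X := fun n => if n = 0 then A else if n = 1 then B else ∅ with hf
    have hU : (⋃ i, f i) = A ∪ B := by
      apply subset_antisymm
      · refine iUnion_subset fun i => ?_
        rcases i with _ | _ | i <;> simp [hf]
      · refine union_subset ?_ ?_
        · simpa [hf] using subset_iUnion f 0
        · simpa [hf] using subset_iUnion f 1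
    have hμ := hμadd f (by rintro (_ | _ | i) <;> simp [hf, hA, hB, hΩempty])
      (by
        rintro (_ | _ | i) (_ | _ | j) hij
        · exact absurd rfl hij
        · exact hd
        · exact Set.disjoint_empty _
        · exact hd.symm
        · exact absurd rfl hij
        · exact Set.disjoint_empty _
        · exact Set.empty_disjoint _
        · exact Set.empty_disjoint _
        · exact Set.empty_disjoint _)
      (hU ▸ hΩunion _ hA _ hB)
    rw [hU] at hμ
    rw [hμ, tsum_eq_sum (s := {0, 1}) (by
      rintro (_ | _ | i) hi
      · simp at hi
      · simp at hi
      · exact hμempty)]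
    simp [hf]
  -- each member of Ω is Carathéodory measurable for ν
  have hcar : ∀ B ∈ Ω, ∀ t : Set X, ν t = ν (t ∩ B) + ν (t \ B) := by
    intro B hB
    refine (MeasureTheory.OuterMeasure.isCaratheodory_iff _).1
      (MeasureTheory.OuterMeasure.ofFunction_caratheodory (fun t => ?_))
    by_cases ht : t ∈ Ω
    · have h1 : t ∩ B ∈ Ω := hΩinter _ ht _ hB
      have h2 : t \ B ∈ Ω := hΩdiff _ ht _ hB
      have hdisj : Disjoint (t ∩ B) (t \ B) :=
        disjoint_compl_right.mono Set.inter_subset_right (fun x hx => hx.2)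
      have : m t = m (t ∩ B) + m (t \ B) := by
        simp only [hmdef, if_pos ht, if_pos h1, if_pos h2]
        rw [← hadd2 _ h1 _ h2 hdisj, Set.inter_union_diff]
      exact this.ge
    · simp [hmdef, ht]
  have hνle : ∀ s ∈ Ω, ν s ≤ μ s := fun s hs =>
    (MeasureTheory.OuterMeasure.ofFunction_le s).trans_eq (if_pos hs)
  have hEfin : ν E ≠ ⊤ := by
    have : ν E ≤ μ Set.univ := (measure_mono (subset_univ E)).trans (hνle _ hΩuniv)
    exact (this.trans_lt hμfin).ne
  constructor
  · -- Carathéodory → approximable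
    intro h
    have key : ∀ ε : ℝ≥0∞, 0 < ε → ε ≠ ⊤ → ∃ B ∈ Ω, ν (B ∆ E) < ε + ε := by
      intro ε hε hεtop
      have hlt : muStar Ω μ E < ν E + ε := by
        rw [hmu]; exact ENNReal.lt_add_right hEfin hε.ne'
      obtain ⟨f, hf, hfE, hsum⟩ :
          ∃ f : ℕ → Set X, (∀ i, f i ∈ Ω) ∧ E ⊆ ⋃ i, f i ∧ ∑' i, μ (f i) < ν E + ε := by
        simp only [muStar, iInf_lt_iff] at hlt
        obtain ⟨f, hf, hfE, hsum⟩ := hlt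
        exact ⟨f, hf, hfE, hsum⟩
      have hne : (∑' i, μ (f i)) ≠ ⊤ :=
        (hsum.trans (ENNReal.add_lt_top.2 ⟨hEfin.lt_top, hεtop.lt_top⟩)).ne
      obtain ⟨N, hN⟩ : ∃ N, ∑' i, μ (f (i + N)) < ε :=
        ((tendsto_order.1 (ENNReal.tendsto_sum_nat_add (fun i => μ (f i)) hne)).2 ε hε).exists
      set B : Set X := ⋃ i ∈ Finset.range N, f i with hBdef
      have hBΩ : B ∈ Ω := by
        rw [hBdef]
        clear hBdef hN
        induction (Finset.range N) using Finset.induction_on with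
        | empty => simpa using hΩempty
        | insert h _ _ ih =>
          rw [Finset.set_biUnion_insert]
          exact hΩunion _ (hf _) _ ih
      refine ⟨B, hBΩ, ?_⟩
      set U : Set X := ⋃ i, f i with hUdef
      have hBU : B ⊆ U := by
        rw [hBdef, hUdef]
        exact iUnion₂_subset fun i _ => subset_iUnion f i
      -- ν (U \ B) < ε
      have hUB : ν (U \ B) < ε := by
        refine lt_of_le_of_lt ?_ hN
        have hsub : U \ B ⊆ ⋃ i, f (i + N) := by
          rintro x ⟨hxU, hxB⟩
          obtain ⟨i, hxi⟩ := mem_iUnion.1 hxU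
          by_cases hi : i < N
          · exact absurd (mem_biUnion (Finset.mem_range.2 hi) hxi) hxB
          · exact mem_iUnion.2 ⟨i - N, by rwa [Nat.sub_add_cancel (not_lt.1 hi)]⟩
        calc ν (U \ B) ≤ ν (⋃ i, f (i + N)) := measure_mono hsub
          _ ≤ ∑' i, ν (f (i + N)) := measure_iUnion_le _
          _ ≤ ∑' i, μ (f (i + N)) := ENNReal.tsum_le_tsum fun i => hνle _ (hf _)
      -- ν (U \ E) < ε
      have hUE : ν (U \ E) < ε := by
        have hcarU := h U
        rw [hmu, hmu, hmu] at hcarU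
        rw [Set.inter_eq_right.2 hfE] at hcarU
        have hUsum : ν U ≤ ∑' i, μ (f i) :=
          (measure_iUnion_le _).trans (ENNReal.tsum_le_tsum fun i => hνle _ (hf _))
        have : ν E + ν (U ∩ Eᶜ) < ν E + ε := (hcarU ▸ hUsum).trans_lt hsum
        have := (ENNReal.add_lt_add_iff_left hEfin).1 this
        rwa [← Set.diff_eq] at this
      -- conclude
      have hsymm : B ∆ E ⊆ (U \ E) ∪ (U \ B) := by
        rw [Set.symmDiff_def]
        refine union_subset_union ?_ ?_
        · exact diff_subset_diff_left hBU
        · exact diff_subset_diff_left hfE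
      calc ν (B ∆ E) ≤ ν (U \ E) + ν (U \ B) :=
            (measure_mono hsymm).trans (measure_union_le _ _)
        _ < ε + ε := ENNReal.add_lt_add hUE hUB
    -- build the sequence
    have hprop : ∀ n : ℕ, ∃ B ∈ Ω, ν (B ∆ E) < (((n : ℝ≥0∞) + 1)⁻¹) + ((n : ℝ≥0∞) + 1)⁻¹ := by
      intro n
      refine key _ (ENNReal.inv_pos.2 (by simp)) (ENNReal.inv_ne_top.2 (by simp))
    choose B hBΩ hB using hprop
    refine ⟨B, hBΩ, ?_⟩
    simp only [hmu]
    have hg : Tendsto (fun n : ℕ => (((n : ℝ≥0∞) + 1)⁻¹) + ((n : ℝ≥0∞) + 1)⁻¹) atTop (𝓝 0) := by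
      have h1 : Tendsto (fun n : ℕ => ((n : ℝ≥0∞) + 1)⁻¹) atTop (𝓝 0) := by
        have h2 := ENNReal.tendsto_inv_nat_nhds_zero.comp (tendsto_add_atTop_nat 1)
        refine h2.congr fun n => ?_
        simp [Function.comp]
      simpa using h1.add h1
    exact tendsto_of_tendsto_of_tendsto_of_le_of_le tendsto_const_nhds hg
      (fun n => zero_le) (fun n => (hB n).le)
  · -- approximable → Carathéodory
    rintro ⟨B, hBΩ, hB⟩ A
    simp only [hmu] at hB ⊢
    refine le_antisymm ?_ ?_
    · calc ν A = ν (A ∩ E ∪ A ∩ Eᶜ) := by rw [Set.inter_union_compl]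
        _ ≤ ν (A ∩ E) + ν (A ∩ Eᶜ) := measure_union_le _ _
    · refine ge_of_tendsto (f := fun n => ν A + (ν (B n ∆ E) + ν (B n ∆ E)))
        (by simpa using (tendsto_const_nhds (x := ν A)).add (hB.add hB))
        (Eventually.of_forall fun n => ?_)
      have e1 : ν (A ∩ E) ≤ ν (A ∩ B n) + ν (B n ∆ E) := by
        refine (measure_mono ?_).trans (measure_union_le _ _)
        intro x ⟨hxA, hxE⟩
        by_cases hxB : x ∈ B n
        · exact Or.inl ⟨hxA, hxB⟩
        · exact Or.inr (Set.mem_symmDiff.2 (Or.inr ⟨hxE, hxB⟩))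
      have e2 : ν (A ∩ Eᶜ) ≤ ν (A \ B n) + ν (B n ∆ E) := by
        refine (measure_mono ?_).trans (measure_union_le _ _)
        intro x ⟨hxA, hxE⟩
        by_cases hxB : x ∈ B n
        · exact Or.inr (Set.mem_symmDiff.2 (Or.inl ⟨hxB, hxE⟩))
        · exact Or.inl ⟨hxA, hxB⟩
      calc ν (A ∩ E) + ν (A ∩ Eᶜ)
          ≤ (ν (A ∩ B n) + ν (B n ∆ E)) + (ν (A \ B n) + ν (B n ∆ E)) := add_le_add e1 e2
        _ = (ν (A ∩ B n) + ν (A \ B n)) + (ν (B n ∆ E) + ν (B n ∆ E)) := by ring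
        _ = ν A + (ν (B n ∆ E) + ν (B n ∆ E)) := by rw [← hcar (B n) (hBΩ n) A]
end
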